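/- Let k_1, k_2 ≥ 4 be even integers. Define V_{k_1,k_2}^ℤ[I_H] = {P ∈ V_{k_1,k_2}^ℤ : P|_{(1+S,1)} = 0, P|_{(1+U+U²,1)} = 0, P|_{(1,1−T)} = 0} and V_{k_1,k_2}^ℤ[I_V] = {P ∈ V_{k_1,k_2}^ℤ : P|_{(1,1+S)} = 0, P|_{(1,1+U+U²)} = 0, P|_{(1−US,1)} = 0}. Then V_{k_1,k_2}^ℤ[I_H] = { p(X_1) : p ∈ W_{k_1}^ℤ } (polynomials in X_1 alone, lying in W_{k_1}^ℤ) and V_{k_1,k_2}^ℤ[I_V] = { X_1^{k_1−2} · q(X_2) : q ∈ W_{k_2}^ℤ }. -/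

import Mathlib

open MvPolynomial

noncomputable section

/-- `S = (0 −1; 1 0)`. -/
def Smat : Matrix (Fin 2) (Fin 2) ℤ := !![0, -1; 1, 0]

/-- `T = (1 1; 0 1)`. -/
def Tmat : Matrix (Fin 2) (Fin 2) ℤ := !![1, 1; 0, 1]

/-- `U = (0 1; −1 1)`. -/
def Umat : Matrix (Fin 2) (Fin 2) ℤ := !![0, 1; -1, 1]

variable {R : Type*} [CommRing R]

/-- The slash action of a pair `(A,B)` of integral `2×2` matrices on a polynomial in the
two variables `X 0, X 1`, with weight exponents `w₁` on `X 0` and `w₂` on `X 1`: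
monomials `X 0^{e₀} X 1^{e₁}` are sent to
`(a X₀+b)^{e₀}(c X₀+d)^{w₁−e₀} · (a' X₁+b')^{e₁}(c' X₁+d')^{w₂−e₁}`; for polynomials of
degree `≤ wⱼ` in `X j` this is `(cX₀+d)^{w₁}(c'X₁+d')^{w₂} P((aX₀+b)/(cX₀+d),(a'X₁+b')/(c'X₁+d'))`. -/
def slash2 (w₁ w₂ : ℕ) (A B : Matrix (Fin 2) (Fin 2) ℤ) (P : MvPolynomial (Fin 2) R) :
    MvPolynomial (Fin 2) R :=
  ∑ e ∈ P.support, MvPolynomial.C (MvPolynomial.coeff e P) *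
    ((C ((A 0 0 : ℤ) : R) * X 0 + C ((A 0 1 : ℤ) : R)) ^ (e 0) *
      (C ((A 1 0 : ℤ) : R) * X 0 + C ((A 1 1 : ℤ) : R)) ^ (w₁ - e 0)) *
    ((C ((B 0 0 : ℤ) : R) * X 1 + C ((B 0 1 : ℤ) : R)) ^ (e 1) *
      (C ((B 1 0 : ℤ) : R) * X 1 + C ((B 1 1 : ℤ) : R)) ^ (w₂ - e 1))

/-- The slash action of a single matrix `A` on the variable `X j` (with weight exponent `w`),
leaving the other variable untouched. -/
def slashVar (j : Fin 2) (w : ℕ) (A : Matrix (Fin 2) (Fin 2) ℤ)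
    (P : MvPolynomial (Fin 2) R) : MvPolynomial (Fin 2) R :=
  if j = 0 then slash2 w 0 A 1 P else slash2 0 w 1 A P

/-- `P ∈ V_{k₁,k₂}`: degrees at most `k₁−2` in `X 0` and `k₂−2` in `X 1`. -/
def memV2 (k₁ k₂ : ℕ) (P : MvPolynomial (Fin 2) R) : Prop :=
  MvPolynomial.degreeOf 0 P ≤ k₁ - 2 ∧ MvPolynomial.degreeOf 1 P ≤ k₂ - 2

/-- `P` involves only the variable `X j`. -/
def onlyVar (j : Fin 2) (P : MvPolynomial (Fin 2) R) : Prop :=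
  ∀ i : Fin 2, i ≠ j → MvPolynomial.degreeOf i P = 0

/-- `P` is an element of `W_k` in the single variable `X j`: a polynomial of degree `≤ k−2`
in `X j` alone with `P|_{1+S} = 0` and `P|_{1+U+U²} = 0`. -/
def memW1 (j : Fin 2) (k : ℕ) (P : MvPolynomial (Fin 2) R) : Prop :=
  onlyVar j P ∧ MvPolynomial.degreeOf j P ≤ k - 2 ∧
    P + slashVar j (k - 2) Smat P = 0 ∧
    P + slashVar j (k - 2) Umat P + slashVar j (k - 2) (Umat * Umat) P = 0

/-- `P ∈ V_{k₁,k₂}[I_D]`: `P|_{(1,1)+(S,S)} = 0` and `P|_{(1,1)+(U,U)+(U²,U²)} = 0`. -/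
def memVID (k₁ k₂ : ℕ) (P : MvPolynomial (Fin 2) R) : Prop :=
  memV2 k₁ k₂ P ∧
    P + slash2 (k₁ - 2) (k₂ - 2) Smat Smat P = 0 ∧
    P + slash2 (k₁ - 2) (k₂ - 2) Umat Umat P +
      slash2 (k₁ - 2) (k₂ - 2) (Umat * Umat) (Umat * Umat) P = 0

/-- `P ∈ W_{k₁,k₂}`: the five defining relations. -/
def memW2 (k₁ k₂ : ℕ) (P : MvPolynomial (Fin 2) R) : Prop :=
  memV2 k₁ k₂ P ∧
    (P + slash2 (k₁-2) (k₂-2) Smat 1 P + slash2 (k₁-2) (k₂-2) 1 Smat P +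
      slash2 (k₁-2) (k₂-2) Smat Smat P = 0) ∧
    (P + slash2 (k₁-2) (k₂-2) Umat 1 P + slash2 (k₁-2) (k₂-2) (Umat*Umat) 1 P +
      slash2 (k₁-2) (k₂-2) Smat Smat P + slash2 (k₁-2) (k₂-2) (Smat*Umat) Smat P +
      slash2 (k₁-2) (k₂-2) (Smat*(Umat*Umat)) Smat P = 0) ∧
    (P + slash2 (k₁-2) (k₂-2) 1 Umat P + slash2 (k₁-2) (k₂-2) 1 (Umat*Umat) P +
      slash2 (k₁-2) (k₂-2) Smat Smat P + slash2 (k₁-2) (k₂-2) Smat (Smat*Umat) P +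
      slash2 (k₁-2) (k₂-2) Smat (Smat*(Umat*Umat)) P = 0) ∧
    (P + slash2 (k₁-2) (k₂-2) 1 Umat P + slash2 (k₁-2) (k₂-2) 1 (Umat*Umat) P +
      slash2 (k₁-2) (k₂-2) Umat 1 P + slash2 (k₁-2) (k₂-2) Umat Umat P +
      slash2 (k₁-2) (k₂-2) Umat (Umat*Umat) P + slash2 (k₁-2) (k₂-2) (Umat*Umat) 1 P +
      slash2 (k₁-2) (k₂-2) (Umat*Umat) Umat P +
      slash2 (k₁-2) (k₂-2) (Umat*Umat) (Umat*Umat) P = 0) ∧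
    (slash2 (k₁-2) (k₂-2) Smat Smat P + slash2 (k₁-2) (k₂-2) Smat (Smat*(Umat*Umat)) P +
      slash2 (k₁-2) (k₂-2) (Smat*(Umat*Umat)) (Smat*(Umat*Umat)) P +
      slash2 (k₁-2) (k₂-2) 1 (Umat*Umat) P - slash2 (k₁-2) (k₂-2) Umat Umat P = 0)

section Aux

open Polynomial in
/-- A polynomial fixed by `X ↦ X+1` is constant. -/
lemma comp_X_add_one_fixed {A : Type*} [CommRing A] [IsDomain A] [CharZero A]
    {p : Polynomial A} (h : p.comp (Polynomial.X + 1) = p) :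
    p = Polynomial.C (p.coeff 0) := by
  have hev : ∀ n : ℕ, p.eval ((n : A)) = p.eval 0 := by
    intro n
    induction n with
    | zero => norm_num
    | succ n ih =>
      have h2 := congrArg (Polynomial.eval ((n : A))) h
      rw [Polynomial.eval_comp] at h2
      simp only [Polynomial.eval_add, Polynomial.eval_X, Polynomial.eval_one] at h2
      rw [← ih, ← h2]
      push_cast
      ring_nf
  have hq : p - Polynomial.C (p.eval 0) = 0 := by
    apply Polynomial.eq_zero_of_infinite_isRoot
    apply Set.Infinite.mono (s := Set.range (Nat.cast : ℕ → A))
    · rintro _ ⟨n, rfl⟩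
      simp [Polynomial.IsRoot, hev n]
    · exact Set.infinite_range_of_injective Nat.cast_injective
  rw [Polynomial.coeff_zero_eq_eval_zero]
  linear_combination (norm := ring_nf) hq
  
end Aux
section Aux2
open Polynomial (reflect revAt)

local notation "Y" => Polynomial.X

lemma reflect_X_add_one_pow {A : Type*} [CommRing A] [Nontrivial A] (n : ℕ) :
    reflect n ((Y + 1 : Polynomial A) ^ n) = (Y + 1) ^ n := by
  induction n with
  | zero => simp
  | succ n ih =>
    have h1 : ((Y + 1 : Polynomial A)).natDegree ≤ 1 := by
      simpa using Polynomial.natDegree_add_le (Y : Polynomial A) 1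
    have hn : ((Y + 1 : Polynomial A) ^ n).natDegree ≤ n :=
      le_trans Polynomial.natDegree_pow_le
        (by simpa using Nat.mul_le_mul_left n h1)
    have h2 : reflect 1 ((Y + 1 : Polynomial A)) = Y + 1 := by
      rw [Polynomial.reflect_add, ← pow_one (Y : Polynomial A), Polynomial.reflect_monomial,
        ← Polynomial.C_1, Polynomial.reflect_C]
      simp [add_comm]
    calc reflect (n + 1) ((Y + 1 : Polynomial A) ^ (n + 1))
        = reflect (n + 1) ((Y + 1 : Polynomial A) ^ n * (Y + 1)) := by rw [pow_succ]
      _ = reflect n ((Y + 1 : Polynomial A) ^ n) * reflect 1 (Y + 1) :=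
          Polynomial.reflect_mul _ _ hn h1
      _ = (Y + 1) ^ n * (Y + 1) := by rw [ih, h2]
      _ = (Y + 1) ^ (n + 1) := (pow_succ _ _).symm

lemma reflect_finset_sum {A : Type*} [CommRing A] {ι : Type*} (s : Finset ι) (N : ℕ)
    (F : ι → Polynomial A) : reflect N (∑ i ∈ s, F i) = ∑ i ∈ s, reflect N (F i) := by
  classical
  induction s using Finset.induction with
  | empty => simp [Polynomial.reflect_zero]
  | insert a s' h ih => simp [Finset.sum_insert h, Polynomial.reflect_add, ih]

/-- If `f = ∑ aᵢ Xⁱ (X+1)^{w−i}` with `deg f ≤ w` then `f = a X^w`. -/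
lemma hw_fixed {A : Type*} [CommRing A] [IsDomain A] [CharZero A] {w : ℕ} {f : Polynomial A}
    (hdeg : f.natDegree ≤ w)
    (h : f = ∑ i ∈ f.support, Polynomial.C (f.coeff i) * Y ^ i * (Y + 1) ^ (w - i)) :
    f = Polynomial.C (f.coeff w) * Y ^ w := by
  have hXadd1 : ((Y + 1 : Polynomial A)).natDegree ≤ 1 := by
    simpa using Polynomial.natDegree_add_le (Y : Polynomial A) 1
  have hsupp : ∀ i ∈ f.support, i ≤ w := fun i hi =>
    le_trans (Polynomial.le_natDegree_of_mem_supp i hi) hdeg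
  have hg : reflect w f = ∑ i ∈ f.support, Polynomial.C (f.coeff i) * (Y + 1) ^ (w - i) := by
    conv_lhs => rw [h]
    rw [reflect_finset_sum]
    refine Finset.sum_congr rfl fun i hi => ?_
    have hiw := hsupp i hi
    have h1 : (Polynomial.C (f.coeff i) * Y ^ i).natDegree ≤ i :=
      le_trans (Polynomial.natDegree_C_mul_le _ _) (by simp)
    have h2 : ((Y + 1 : Polynomial A) ^ (w - i)).natDegree ≤ w - i :=
      le_trans Polynomial.natDegree_pow_le (by simpa using Nat.mul_le_mul_left (w - i) hXadd1)
    have hr := Polynomial.reflect_mul (Polynomial.C (f.coeff i) * Y ^ i) ((Y + 1) ^ (w - i)) h1 h2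
    rw [Nat.add_sub_cancel' hiw] at hr
    rw [hr, Polynomial.reflect_C_mul_X_pow, Polynomial.revAt_le (le_refl i), Nat.sub_self,
      pow_zero, mul_one, reflect_X_add_one_pow]
  have hg2 : reflect w f = ∑ i ∈ f.support, Polynomial.C (f.coeff i) * Y ^ (w - i) := by
    conv_lhs => rw [f.as_sum_support]
    rw [reflect_finset_sum]
    refine Finset.sum_congr rfl fun i hi => ?_
    rw [← Polynomial.C_mul_X_pow_eq_monomial, Polynomial.reflect_C_mul_X_pow,
      Polynomial.revAt_le (hsupp i hi)]
  have hcomp : (reflect w f).comp (Y + 1) = reflect w f := by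
    conv_lhs => rw [hg2]
    rw [show ∀ p q : Polynomial A, p.comp q = Polynomial.eval₂ Polynomial.C q p
        from fun _ _ => rfl,
      Polynomial.eval₂_finset_sum]
    rw [hg]
    refine Finset.sum_congr rfl fun i hi => ?_
    rw [Polynomial.eval₂_mul, Polynomial.eval₂_C, Polynomial.eval₂_pow, Polynomial.eval₂_X]
  have hC := comp_X_add_one_fixed hcomp
  rw [Polynomial.coeff_reflect, Polynomial.revAt_le (Nat.zero_le w), Nat.sub_zero] at hC
  have hfix : reflect w (reflect w f) = f := by
    ext i
    rw [Polynomial.coeff_reflect, Polynomial.coeff_reflect, Polynomial.revAt_invol]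
  calc f = reflect w (reflect w f) := hfix.symm
    _ = reflect w (Polynomial.C (f.coeff w)) := by rw [hC]
    _ = Polynomial.C (f.coeff w) * Y ^ w := Polynomial.reflect_C _ _

end Aux2
section Aux3

variable {R : Type*} [CommRing R]

lemma slash2_zero (w₁ w₂ : ℕ) (A B : Matrix (Fin 2) (Fin 2) ℤ) :
    slash2 w₁ w₂ A B (0 : MvPolynomial (Fin 2) R) = 0 := by
  simp [slash2]

lemma slash2_monomial (w₁ w₂ : ℕ) (A B : Matrix (Fin 2) (Fin 2) ℤ) (e : Fin 2 →₀ ℕ) (c : R) :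
    slash2 w₁ w₂ A B (monomial e c) = MvPolynomial.C c *
      ((C ((A 0 0 : ℤ) : R) * X 0 + C ((A 0 1 : ℤ) : R)) ^ (e 0) *
        (C ((A 1 0 : ℤ) : R) * X 0 + C ((A 1 1 : ℤ) : R)) ^ (w₁ - e 0)) *
      ((C ((B 0 0 : ℤ) : R) * X 1 + C ((B 0 1 : ℤ) : R)) ^ (e 1) *
        (C ((B 1 0 : ℤ) : R) * X 1 + C ((B 1 1 : ℤ) : R)) ^ (w₂ - e 1)) := by
  classical
  rcases eq_or_ne c 0 with rfl | hc
  · simp [slash2, support_monomial]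
  · rw [slash2, support_monomial, if_neg hc, Finset.sum_singleton, coeff_monomial, if_pos rfl]

lemma slash2_add (w₁ w₂ : ℕ) (A B : Matrix (Fin 2) (Fin 2) ℤ) (P Q : MvPolynomial (Fin 2) R) :
    slash2 w₁ w₂ A B (P + Q) = slash2 w₁ w₂ A B P + slash2 w₁ w₂ A B Q := by
  classical
  have hrep : ∀ P : MvPolynomial (Fin 2) R, slash2 w₁ w₂ A B P =
      Finsupp.sum (AddMonoidAlgebra.coeff P) (fun e c => MvPolynomial.C c *
        ((C ((A 0 0 : ℤ) : R) * X 0 + C ((A 0 1 : ℤ) : R)) ^ (e 0) *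
          (C ((A 1 0 : ℤ) : R) * X 0 + C ((A 1 1 : ℤ) : R)) ^ (w₁ - e 0)) *
        ((C ((B 0 0 : ℤ) : R) * X 1 + C ((B 0 1 : ℤ) : R)) ^ (e 1) *
          (C ((B 1 0 : ℤ) : R) * X 1 + C ((B 1 1 : ℤ) : R)) ^ (w₂ - e 1))) := fun P => rfl
  rw [hrep, hrep, hrep, AddMonoidAlgebra.coeff_add, Finsupp.sum_add_index']
  · intro e; simp
  · intro e b₁ b₂; simp [add_mul]

/-- `slash2` as an additive monoid hom. -/
def slash2Hom (w₁ w₂ : ℕ) (A B : Matrix (Fin 2) (Fin 2) ℤ) :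
    MvPolynomial (Fin 2) R →+ MvPolynomial (Fin 2) R where
  toFun := slash2 w₁ w₂ A B
  map_zero' := slash2_zero w₁ w₂ A B
  map_add' := slash2_add w₁ w₂ A B

lemma monomial_eq_fin2 (e : Fin 2 →₀ ℕ) (c : R) :
    (monomial e c : MvPolynomial (Fin 2) R) = MvPolynomial.C c * (X 0 ^ (e 0) * X 1 ^ (e 1)) := by
  rw [monomial_eq, Finsupp.prod_fintype _ _ (fun i => pow_zero _), Fin.prod_univ_two]

end Aux3
section Aux4

variable {R : Type*} [CommRing R]

@[simp] lemma Tmat_00 : Tmat 0 0 = 1 := rfl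
@[simp] lemma Tmat_01 : Tmat 0 1 = 1 := rfl
@[simp] lemma Tmat_10 : Tmat 1 0 = 0 := rfl
@[simp] lemma Tmat_11 : Tmat 1 1 = 1 := rfl

lemma USmat_eq : Umat * Smat = !![1, 0; 1, 1] := by
  ext i j
  fin_cases i <;> fin_cases j <;>
    simp [Umat, Smat, Matrix.mul_apply, Fin.sum_univ_two]

/-- The `X 1`-factor of `slashVar 1`. -/
def rfac (B : Matrix (Fin 2) (Fin 2) ℤ) (w m : ℕ) : MvPolynomial (Fin 2) R :=
  (C ((B 0 0 : ℤ) : R) * X 1 + C ((B 0 1 : ℤ) : R)) ^ m *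
    (C ((B 1 0 : ℤ) : R) * X 1 + C ((B 1 1 : ℤ) : R)) ^ (w - m)

lemma slashVar1_monomial (w : ℕ) (B : Matrix (Fin 2) (Fin 2) ℤ) (e : Fin 2 →₀ ℕ) (c : R) :
    slashVar 1 w B (monomial e c) = MvPolynomial.C c * X 0 ^ (e 0) * rfac B w (e 1) := by
  rw [slashVar, if_neg (by decide), slash2_monomial, rfac]
  have h1 : ((1 : Matrix (Fin 2) (Fin 2) ℤ) 0 0) = 1 := rfl
  have h2 : ((1 : Matrix (Fin 2) (Fin 2) ℤ) 0 1) = 0 := rfl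
  have h3 : ((1 : Matrix (Fin 2) (Fin 2) ℤ) 1 0) = 0 := rfl
  have h4 : ((1 : Matrix (Fin 2) (Fin 2) ℤ) 1 1) = 1 := rfl
  rw [h1, h2, h3, h4, Nat.zero_sub]
  push_cast
  simp

lemma slashVar1_add (w : ℕ) (B : Matrix (Fin 2) (Fin 2) ℤ) (P Q : MvPolynomial (Fin 2) R) :
    slashVar 1 w B (P + Q) = slashVar 1 w B P + slashVar 1 w B Q := by
  rw [slashVar, if_neg (by decide), slashVar, if_neg (by decide), slashVar, if_neg (by decide)]
  exact slash2_add _ _ _ _ _ _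

lemma slashVar1_X0pow_mul (w k : ℕ) (B : Matrix (Fin 2) (Fin 2) ℤ) (P : MvPolynomial (Fin 2) R) :
    slashVar 1 w B (X 0 ^ k * P) = X 0 ^ k * slashVar 1 w B P := by
  induction P using MvPolynomial.induction_on' with
  | monomial e c =>
    rw [X_pow_eq_monomial, monomial_mul, one_mul, slashVar1_monomial, slashVar1_monomial]
    have h0 : (Finsupp.single (0 : Fin 2) k + e) 0 = k + e 0 := by
      simp [Finsupp.add_apply]
    have h1 : (Finsupp.single (0 : Fin 2) k + e) 1 = e 1 := by
      simp [Finsupp.add_apply, Finsupp.single_eq_of_ne (by decide : (0 : Fin 2) ≠ 1)]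
    rw [h0, h1, ← X_pow_eq_monomial, pow_add]
    ring
  | add p q hp hq =>
    rw [mul_add, slashVar1_add, slashVar1_add, hp, hq, mul_add]

lemma rfac_Tmat (w m : ℕ) : (rfac Tmat w m : MvPolynomial (Fin 2) R) = (X 1 + 1) ^ m := by
  rw [rfac]
  simp

lemma slashT_monomial (w : ℕ) (e : Fin 2 →₀ ℕ) (c : R) :
    slashVar 1 w Tmat (monomial e c) = MvPolynomial.C c * X 0 ^ (e 0) * (X 1 + 1) ^ (e 1) := by
  rw [slashVar1_monomial, rfac_Tmat]

end Aux4
section Aux5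

local notation "Y" => Polynomial.X

/-- One-variable polynomials over `ℤ` in disguise. -/
abbrev A1 : Type := MvPolynomial (Fin 1) ℤ

/-- `X 0` is the polynomial variable. -/
def Φ2 : MvPolynomial (Fin 2) ℤ ≃ₐ[ℤ] Polynomial A1 := MvPolynomial.finSuccEquiv ℤ 1

/-- `X 1` is the polynomial variable. -/
def Φ1 : MvPolynomial (Fin 2) ℤ ≃ₐ[ℤ] Polynomial A1 :=
  (MvPolynomial.renameEquiv ℤ (Equiv.swap (0 : Fin 2) 1)).trans (MvPolynomial.finSuccEquiv ℤ 1)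

lemma Φ2_X0 : Φ2 (X 0) = Y := MvPolynomial.finSuccEquiv_X_zero

lemma Φ2_X1 : Φ2 (X 1) = Polynomial.C (X 0) := by
  rw [Φ2, show (1 : Fin 2) = Fin.succ 0 from rfl]
  exact MvPolynomial.finSuccEquiv_X_succ

lemma Φ2_C (c : ℤ) : Φ2 (MvPolynomial.C c) = Polynomial.C (MvPolynomial.C c) := by
  rw [show (MvPolynomial.C c : MvPolynomial (Fin 2) ℤ) = (c : MvPolynomial (Fin 2) ℤ) from
      eq_intCast (MvPolynomial.C : ℤ →+* MvPolynomial (Fin 2) ℤ) c, map_intCast]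
  rw [show (Polynomial.C (MvPolynomial.C c) : Polynomial A1) = (c : Polynomial A1) from by
      rw [← RingHom.comp_apply]; exact eq_intCast _ c]

lemma Φ1_X0 : Φ1 (X 0) = Polynomial.C (X 0) := by
  rw [Φ1, AlgEquiv.trans_apply, renameEquiv_apply, rename_X, Equiv.swap_apply_left,
    show (1 : Fin 2) = Fin.succ 0 from rfl]
  exact MvPolynomial.finSuccEquiv_X_succ

lemma Φ1_X1 : Φ1 (X 1) = Y := by
  rw [Φ1, AlgEquiv.trans_apply, renameEquiv_apply, rename_X, Equiv.swap_apply_right]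
  exact MvPolynomial.finSuccEquiv_X_zero

lemma Φ1_C (c : ℤ) : Φ1 (MvPolynomial.C c) = Polynomial.C (MvPolynomial.C c) := by
  rw [show (MvPolynomial.C c : MvPolynomial (Fin 2) ℤ) = (c : MvPolynomial (Fin 2) ℤ) from
      eq_intCast (MvPolynomial.C : ℤ →+* MvPolynomial (Fin 2) ℤ) c, map_intCast]
  rw [show (Polynomial.C (MvPolynomial.C c) : Polynomial A1) = (c : Polynomial A1) from by
      rw [← RingHom.comp_apply]; exact eq_intCast _ c]

lemma Φ2_natDegree (P : MvPolynomial (Fin 2) ℤ) : (Φ2 P).natDegree = degreeOf 0 P :=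
  MvPolynomial.natDegree_finSuccEquiv P

lemma Φ1_natDegree (P : MvPolynomial (Fin 2) ℤ) : (Φ1 P).natDegree = degreeOf 1 P := by
  rw [Φ1, AlgEquiv.trans_apply, MvPolynomial.natDegree_finSuccEquiv, renameEquiv_apply]
  have := MvPolynomial.degreeOf_rename_of_injective
    (Equiv.injective (Equiv.swap (0 : Fin 2) 1)) (p := P) 1
  rwa [Equiv.swap_apply_right] at this

end Aux5
section Aux6

local notation "Y" => Polynomial.X

lemma slashVar1_finset_sum (w : ℕ) (B : Matrix (Fin 2) (Fin 2) ℤ) {ι : Type*} (s : Finset ι)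
    (F : ι → MvPolynomial (Fin 2) ℤ) :
    slashVar 1 w B (∑ i ∈ s, F i) = ∑ i ∈ s, slashVar 1 w B (F i) := by
  simp only [slashVar, if_neg (by decide : ¬ (1 : Fin 2) = 0)]
  exact map_sum (slash2Hom 0 w 1 B) F s

lemma key1 (w : ℕ) (P : MvPolynomial (Fin 2) ℤ) :
    Φ1 (slashVar 1 w Tmat P) = (Φ1 P).comp (Y + 1) := by
  induction P using MvPolynomial.induction_on' with
  | monomial e c =>
    rw [slashT_monomial, monomial_eq_fin2]
    rw [map_mul, map_mul, map_pow, map_pow, map_add, map_one, Φ1_C, Φ1_X0, Φ1_X1]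
    rw [map_mul, map_mul, map_pow, map_pow, Φ1_C, Φ1_X0, Φ1_X1]
    simp only [Polynomial.mul_comp, Polynomial.pow_comp, Polynomial.C_comp, Polynomial.X_comp]
    ring
  | add p q hp hq =>
    rw [slashVar1_add, map_add, map_add, hp, hq, Polynomial.add_comp]

lemma T_fixed_deg {w : ℕ} {P : MvPolynomial (Fin 2) ℤ} (h : P = slashVar 1 w Tmat P) :
    degreeOf 1 P = 0 := by
  have hc : (Φ1 P).comp (Y + 1) = Φ1 P := by
    conv_rhs => rw [h]
    rw [key1]
  have h2 := comp_X_add_one_fixed hc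
  rw [← Φ1_natDegree, h2, Polynomial.natDegree_C]

lemma slashT_self (w : ℕ) {P : MvPolynomial (Fin 2) ℤ} (h : degreeOf 1 P = 0) :
    slashVar 1 w Tmat P = P := by
  have hsupp : ∀ e ∈ P.support, e 1 = 0 := fun e he =>
    Nat.le_zero.mp (h ▸ (MvPolynomial.degreeOf_le_iff.mp (le_of_eq h) e he))
  conv_lhs => rw [MvPolynomial.as_sum P]
  conv_rhs => rw [MvPolynomial.as_sum P]
  rw [slashVar1_finset_sum]
  refine Finset.sum_congr rfl fun e he => ?_
  rw [slashT_monomial, hsupp e he, pow_zero, mul_one, monomial_eq_fin2, hsupp e he, pow_zero,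
    mul_one, mul_comm]

end Aux6
section Aux7

local notation "Y" => Polynomial.X

lemma slashVar0_finset_sum (w : ℕ) (B : Matrix (Fin 2) (Fin 2) ℤ) {ι : Type*} (s : Finset ι)
    (F : ι → MvPolynomial (Fin 2) ℤ) :
    slashVar 0 w B (∑ i ∈ s, F i) = ∑ i ∈ s, slashVar 0 w B (F i) := by
  simp only [slashVar, if_pos rfl]
  exact map_sum (slash2Hom w 0 B 1) F s

lemma slashVar0_add (w : ℕ) (B : Matrix (Fin 2) (Fin 2) ℤ) (P Q : MvPolynomial (Fin 2) ℤ) :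
    slashVar 0 w B (P + Q) = slashVar 0 w B P + slashVar 0 w B Q := by
  simp only [slashVar, if_pos rfl]
  exact slash2_add _ _ _ _ _ _

lemma slashUS_monomial (w : ℕ) (e : Fin 2 →₀ ℕ) (c : ℤ) :
    slashVar 0 w (Umat * Smat) (monomial e c) =
      MvPolynomial.C c * (X 0 ^ (e 0) * (X 0 + 1) ^ (w - e 0)) * X 1 ^ (e 1) := by
  rw [slashVar, if_pos rfl, USmat_eq, slash2_monomial]
  have h1 : ((!![1, 0; 1, 1] : Matrix (Fin 2) (Fin 2) ℤ) 0 0) = 1 := rfl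
  have h2 : ((!![1, 0; 1, 1] : Matrix (Fin 2) (Fin 2) ℤ) 0 1) = 0 := rfl
  have h3 : ((!![1, 0; 1, 1] : Matrix (Fin 2) (Fin 2) ℤ) 1 0) = 1 := rfl
  have h4 : ((!![1, 0; 1, 1] : Matrix (Fin 2) (Fin 2) ℤ) 1 1) = 1 := rfl
  have g1 : ((1 : Matrix (Fin 2) (Fin 2) ℤ) 0 0) = 1 := rfl
  have g2 : ((1 : Matrix (Fin 2) (Fin 2) ℤ) 0 1) = 0 := rfl
  have g3 : ((1 : Matrix (Fin 2) (Fin 2) ℤ) 1 0) = 0 := rfl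
  have g4 : ((1 : Matrix (Fin 2) (Fin 2) ℤ) 1 1) = 1 := rfl
  rw [h1, h2, h3, h4, g1, g2, g3, g4, Nat.zero_sub]
  simp [add_comm]

lemma key2 (w : ℕ) (P : MvPolynomial (Fin 2) ℤ) :
    Φ2 (slashVar 0 w (Umat * Smat) P) =
      (Φ2 P).sum fun i a => Polynomial.C a * Y ^ i * (Y + 1) ^ (w - i) := by
  induction P using MvPolynomial.induction_on' with
  | monomial e c =>
    have hmon : Φ2 (monomial e c) = Polynomial.monomial (e 0) (MvPolynomial.C c * X 0 ^ (e 1)) := by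
      rw [monomial_eq_fin2, map_mul, map_mul, map_pow, map_pow, Φ2_C, Φ2_X0, Φ2_X1,
        ← Polynomial.C_mul_X_pow_eq_monomial, map_mul, map_pow]
      ring
    rw [hmon, Polynomial.sum_monomial_index _ _ (by simp), slashUS_monomial,
      map_mul, map_mul, map_mul, map_pow, map_pow, map_pow, map_add, map_one, Φ2_C, Φ2_X0,
      Φ2_X1, map_mul, map_pow]
    ring
  | add p q hp hq =>
    rw [slashVar0_add, map_add, map_add, hp, hq,
      Polynomial.sum_add_index _ _ _ (fun i => by simp) (fun a b₁ b₂ => by simp [add_mul])]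

lemma US_fixed {w : ℕ} {P : MvPolynomial (Fin 2) ℤ} (hdeg : degreeOf 0 P ≤ w)
    (h : P = slashVar 0 w (Umat * Smat) P) :
    ∃ q : MvPolynomial (Fin 2) ℤ, degreeOf 0 q = 0 ∧ P = X 0 ^ w * q := by
  have hfd : (Φ2 P).natDegree ≤ w := by rw [Φ2_natDegree]; exact hdeg
  have hf : Φ2 P = ∑ i ∈ (Φ2 P).support,
      Polynomial.C ((Φ2 P).coeff i) * Y ^ i * (Y + 1) ^ (w - i) := by
    conv_lhs => rw [h, key2]
    rw [Polynomial.sum_def]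
  set a := (Φ2 P).coeff w with ha
  have hXw := hw_fixed hfd hf
  refine ⟨Φ2.symm (Polynomial.C a), ?_, ?_⟩
  · rw [← Φ2_natDegree, AlgEquiv.apply_symm_apply, Polynomial.natDegree_C]
  · apply Φ2.injective
    rw [map_mul, map_pow, Φ2_X0, AlgEquiv.apply_symm_apply, hXw]
    ring

lemma slashUS_self (w : ℕ) {q : MvPolynomial (Fin 2) ℤ} (h : degreeOf 0 q = 0) :
    slashVar 0 w (Umat * Smat) (X 0 ^ w * q) = X 0 ^ w * q := by
  have hsupp : ∀ e ∈ q.support, e 0 = 0 := fun e he =>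
    Nat.le_zero.mp (MvPolynomial.degreeOf_le_iff.mp (le_of_eq h) e he)
  conv_lhs => rw [MvPolynomial.as_sum q]
  conv_rhs => rw [MvPolynomial.as_sum q]
  rw [Finset.mul_sum, slashVar0_finset_sum]
  refine Finset.sum_congr rfl fun e he => ?_
  have hmon : (X 0 : MvPolynomial (Fin 2) ℤ) ^ w * monomial e (coeff e q) =
      monomial (Finsupp.single 0 w + e) (coeff e q) := by
    rw [X_pow_eq_monomial, monomial_mul, one_mul]
  rw [hmon, slashUS_monomial]
  have h0 : (Finsupp.single (0 : Fin 2) w + e) 0 = w := by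
    simp [Finsupp.add_apply, hsupp e he]
  have h1 : (Finsupp.single (0 : Fin 2) w + e) 1 = e 1 := by
    simp [Finsupp.add_apply, Finsupp.single_eq_of_ne (by decide : (0 : Fin 2) ≠ 1)]
  rw [h0, h1, Nat.sub_self, pow_zero, mul_one, monomial_eq_fin2, h0, h1]
  ring

lemma degreeOf_le_mul_X0_pow (k : ℕ) (i : Fin 2) (q : MvPolynomial (Fin 2) ℤ) :
    degreeOf i q ≤ degreeOf i (X 0 ^ k * q) := by
  apply MvPolynomial.degreeOf_le_iff.mpr
  intro m hm
  have hc : coeff (Finsupp.single 0 k + m) ((X 0 : MvPolynomial (Fin 2) ℤ) ^ k * q) =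
      coeff m q := by
    rw [X_pow_eq_monomial, MvPolynomial.coeff_monomial_mul, one_mul]
  have hmem : (Finsupp.single 0 k + m) ∈ ((X 0 : MvPolynomial (Fin 2) ℤ) ^ k * q).support := by
    rw [MvPolynomial.mem_support_iff, hc]
    exact MvPolynomial.mem_support_iff.mp hm
  have := MvPolynomial.degreeOf_le_iff.mp (le_refl (degreeOf i ((X 0 : MvPolynomial (Fin 2) ℤ) ^ k * q))) _ hmem
  calc m i ≤ (Finsupp.single (0 : Fin 2) k + m) i := by simp [Finsupp.add_apply]
    _ ≤ _ := this

end Aux7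
lemma degreeOf_X0_pow_le (i : Fin 2) (w : ℕ) :
    degreeOf i ((X 0 : MvPolynomial (Fin 2) ℤ) ^ w) ≤ Finsupp.single (0 : Fin 2) w i := by
  apply MvPolynomial.degreeOf_le_iff.mpr
  intro m hm
  rw [X_pow_eq_monomial] at hm
  rw [MvPolynomial.support_monomial, if_neg one_ne_zero, Finset.mem_singleton] at hm
  subst hm
  exact le_rfl

/-- computation of `V_{k₁,k₂}^ℤ[I_H]` and `V_{k₁,k₂}^ℤ[I_V]`. -/
theorem statement18 (k₁ k₂ : ℕ) (hk₁ : 4 ≤ k₁) (he₁ : Even k₁) (hk₂ : 4 ≤ k₂) (he₂ : Even k₂) :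
    (∀ P : MvPolynomial (Fin 2) ℤ,
      (memV2 k₁ k₂ P ∧
        P + slashVar 0 (k₁ - 2) Smat P = 0 ∧
        P + slashVar 0 (k₁ - 2) Umat P + slashVar 0 (k₁ - 2) (Umat * Umat) P = 0 ∧
        P - slashVar 1 (k₂ - 2) Tmat P = 0) ↔
      memW1 0 k₁ P) ∧
    (∀ P : MvPolynomial (Fin 2) ℤ,
      (memV2 k₁ k₂ P ∧
        P + slashVar 1 (k₂ - 2) Smat P = 0 ∧
        P + slashVar 1 (k₂ - 2) Umat P + slashVar 1 (k₂ - 2) (Umat * Umat) P = 0 ∧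
        P - slashVar 0 (k₁ - 2) (Umat * Smat) P = 0) ↔
      ∃ q : MvPolynomial (Fin 2) ℤ, memW1 1 k₂ q ∧ P = X 0 ^ (k₁ - 2) * q) := by
  constructor
  · intro P
    constructor
    · rintro ⟨hV, h1, h2, h3⟩
      have hd := T_fixed_deg (sub_eq_zero.mp h3)
      refine ⟨?_, hV.1, h1, h2⟩
      intro i hi
      fin_cases i
      · exact absurd rfl hi
      · exact hd
    · rintro ⟨hOnly, hdeg, h1, h2⟩
      have hd1 : degreeOf 1 P = 0 := hOnly 1 (by decide)
      refine ⟨⟨hdeg, le_of_eq_of_le hd1 (Nat.zero_le _)⟩, h1, h2, ?_⟩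
      rw [slashT_self _ hd1, sub_self]
  · intro P
    constructor
    · rintro ⟨hV, h1, h2, h3⟩
      obtain ⟨q, hq0, hPq⟩ := US_fixed hV.1 (sub_eq_zero.mp h3)
      have hXne : ((X 0 : MvPolynomial (Fin 2) ℤ) ^ (k₁ - 2)) ≠ 0 :=
        pow_ne_zero _ (MvPolynomial.X_ne_zero 0)
      refine ⟨q, ⟨?_, ?_, ?_, ?_⟩, hPq⟩
      · intro i hi
        fin_cases i
        · exact hq0
        · exact absurd rfl hi
      · exact le_trans (degreeOf_le_mul_X0_pow (k₁ - 2) 1 q) (hPq ▸ hV.2)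
      · rw [hPq, slashVar1_X0pow_mul] at h1
        have h' : (X 0 : MvPolynomial (Fin 2) ℤ) ^ (k₁ - 2) *
            (q + slashVar 1 (k₂ - 2) Smat q) = 0 := by
          rw [mul_add]; exact h1
        rcases mul_eq_zero.mp h' with h'' | h''
        · exact absurd h'' hXne
        · exact h''
      · rw [hPq, slashVar1_X0pow_mul, slashVar1_X0pow_mul] at h2
        have h' : (X 0 : MvPolynomial (Fin 2) ℤ) ^ (k₁ - 2) *
            (q + slashVar 1 (k₂ - 2) Umat q + slashVar 1 (k₂ - 2) (Umat * Umat) q) = 0 := by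
          rw [mul_add, mul_add]; exact h2
        rcases mul_eq_zero.mp h' with h'' | h''
        · exact absurd h'' hXne
        · exact h''
    · rintro ⟨q, ⟨hOnly, hdeg, h1, h2⟩, rfl⟩
      have hq0 : degreeOf 0 q = 0 := hOnly 0 (by decide)
      refine ⟨⟨?_, ?_⟩, ?_, ?_, ?_⟩
      · calc degreeOf 0 ((X 0 : MvPolynomial (Fin 2) ℤ) ^ (k₁ - 2) * q)
            ≤ degreeOf 0 ((X 0 : MvPolynomial (Fin 2) ℤ) ^ (k₁ - 2)) + degreeOf 0 q :=
              MvPolynomial.degreeOf_mul_le _ _ _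
          _ ≤ (k₁ - 2) + 0 := by
              refine add_le_add ?_ (le_of_eq hq0)
              simpa using degreeOf_X0_pow_le 0 (k₁ - 2)
          _ = k₁ - 2 := Nat.add_zero _
      · calc degreeOf 1 ((X 0 : MvPolynomial (Fin 2) ℤ) ^ (k₁ - 2) * q)
            ≤ degreeOf 1 ((X 0 : MvPolynomial (Fin 2) ℤ) ^ (k₁ - 2)) + degreeOf 1 q :=
              MvPolynomial.degreeOf_mul_le _ _ _
          _ ≤ 0 + (k₂ - 2) := by
              refine add_le_add ?_ hdeg
              simpa using degreeOf_X0_pow_le 1 (k₁ - 2)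
          _ = k₂ - 2 := Nat.zero_add _
      · rw [slashVar1_X0pow_mul, ← mul_add, h1, mul_zero]
      · rw [slashVar1_X0pow_mul, slashVar1_X0pow_mul, ← mul_add, ← mul_add, h2, mul_zero]
      · rw [slashUS_self _ hq0, sub_self]
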